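/- Let G be an additive abelian group, let A ⊆ G be a finite nonempty set, and suppose |A + A| ≤ K·|A| for some real K < 2. Then there exists a finite subgroup H of G with |H| ≥ (2 − K)·|A| such that A + A is a union of cosets of H, i.e. (A + A) + H = A + A (as sets). -/

import Mathlib

set_option linter.unusedSectionVars false
set_option linter.unnecessarySeqFocus false
open Pointwise Finset
section
variable {G : Type*} [AddCommGroup G] [DecidableEq G]

def tr (g : G) (C : Finset G) : Finset G := C.image (g + ·)

lemma tr_card (g : G) (C : Finset G) : (tr g C).card = C.card :=
  card_image_of_injective _ (add_right_injective g)

lemma mem_tr {g x : G} {C : Finset G} : x ∈ tr g C ↔ ∃ c ∈ C, g + c = x := mem_image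

lemma add_mem_tr {g c : G} {C : Finset G} (hc : c ∈ C) : g + c ∈ tr g C := mem_image_of_mem _ hc

lemma tr_tr (g h : G) (C : Finset G) : tr g (tr h C) = tr (g + h) C := by
  simp only [tr, image_image]; congr 1; funext x; simp [add_assoc]

lemma tr_zero (C : Finset G) : tr 0 C = C := by simp [tr]

/-- stabilizer of a finset, as a finset -/
def addStab (C : Finset G) : Finset G := (C - C).filter fun g => tr g C = C

lemma mem_addStab {C : Finset G} (hC : C.Nonempty) {g : G} :
    g ∈ addStab C ↔ tr g C = C := by
  constructor
  · intro h; exact (mem_filter.1 h).2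
  · intro h
    obtain ⟨c, hc⟩ := hC
    refine mem_filter.2 ⟨?_, h⟩
    have : g + c ∈ C := by rw [← h]; exact add_mem_tr hc
    exact mem_sub.2 ⟨g + c, this, c, hc, by abel⟩

lemma zero_mem_addStab {C : Finset G} (hC : C.Nonempty) : (0 : G) ∈ addStab C :=
  (mem_addStab hC).2 (tr_zero C)

lemma neg_mem_addStab {C : Finset G} (hC : C.Nonempty) {g : G} (hg : g ∈ addStab C) :
    -g ∈ addStab C := by
  rw [mem_addStab hC] at hg ⊢
  calc tr (-g) C = tr (-g) (tr g C) := by rw [hg]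
  _ = tr 0 C := by rw [tr_tr, neg_add_cancel]
  _ = C := tr_zero C

lemma add_mem_addStab {C : Finset G} (hC : C.Nonempty) {g h : G} (hg : g ∈ addStab C)
    (hh : h ∈ addStab C) : g + h ∈ addStab C := by
  rw [mem_addStab hC] at hg hh ⊢
  rw [← tr_tr, hh, hg]

lemma addStab_nonempty {C : Finset G} (hC : C.Nonempty) : (addStab C).Nonempty :=
  ⟨0, zero_mem_addStab hC⟩

lemma card_addStab_le {C : Finset G} (hC : C.Nonempty) : (addStab C).card ≤ C.card := by
  obtain ⟨c, hc⟩ := hC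
  have : (addStab C).image (· + c) ⊆ C := by
    intro x hx
    obtain ⟨g, hg, rfl⟩ := mem_image.1 hx
    have := (mem_addStab ⟨c, hc⟩).1 hg
    rw [← this]; exact add_mem_tr hc
  calc (addStab C).card = ((addStab C).image (· + c)).card :=
        (card_image_of_injective _ (add_left_injective c)).symm
  _ ≤ C.card := card_le_card this

lemma add_addStab_eq {C : Finset G} (hC : C.Nonempty) : C + addStab C = C := by
  apply Subset.antisymm
  · intro x hx
    obtain ⟨c, hc, g, hg, rfl⟩ := mem_add.1 hx
    have h := (mem_addStab hC).1 hg
    rw [← h]; rw [add_comm]; exact add_mem_tr hc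
  · intro x hx
    exact mem_add.2 ⟨x, hx, 0, zero_mem_addStab hC, add_zero x⟩

def IsSubgroupF (K : Finset G) : Prop :=
  (0 : G) ∈ K ∧ (∀ g ∈ K, -g ∈ K) ∧ ∀ g ∈ K, ∀ h ∈ K, g + h ∈ K

lemma IsSubgroupF.sub_mem {K : Finset G} (hK : IsSubgroupF K) {g h : G} (hg : g ∈ K)
    (hh : h ∈ K) : g - h ∈ K := by
  rw [sub_eq_add_neg]; exact hK.2.2 _ hg _ (hK.2.1 _ hh)

lemma IsSubgroupF.nonempty {K : Finset G} (hK : IsSubgroupF K) : K.Nonempty := ⟨0, hK.1⟩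

lemma IsSubgroupF.tr_self {K : Finset G} (hK : IsSubgroupF K) {g : G} (hg : g ∈ K) :
    tr g K = K := by
  apply eq_of_subset_of_card_le
  · intro x hx
    obtain ⟨k, hk, rfl⟩ := mem_tr.1 hx
    exact hK.2.2 _ hg _ hk
  · rw [tr_card]

/-- P is K-periodic -/
def Per (P K : Finset G) : Prop := ∀ g ∈ K, tr g P = P

lemma Per.coset_subset {P K : Finset G} (hP : Per P K) {p : G} (hp : p ∈ P) :
    K.image (· + p) ⊆ P := by
  intro x hx
  obtain ⟨k, hk, rfl⟩ := mem_image.1 hx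
  rw [← hP k hk]; exact add_mem_tr hp

lemma Per.card_le {P K : Finset G} (hP : Per P K) (hne : P.Nonempty) : K.card ≤ P.card := by
  obtain ⟨p, hp⟩ := hne
  calc K.card = (K.image (· + p)).card := (card_image_of_injective _ (add_left_injective p)).symm
  _ ≤ P.card := card_le_card (hP.coset_subset hp)

lemma Per.card_dvd {K : Finset G} (hK : IsSubgroupF K) :
    ∀ (n : ℕ) (P : Finset G), P.card ≤ n → Per P K → K.card ∣ P.card := by
  intro n
  induction n with
  | zero => intro P hP _; interval_cases h : P.card <;> simp
  | succ n IH =>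
    intro P hP hper
    rcases P.eq_empty_or_nonempty with rfl | ⟨p, hp⟩
    · simp
    · set Q := P \ K.image (· + p) with hQ
      have hsub : K.image (· + p) ⊆ P := hper.coset_subset hp
      have hcard : P.card = Q.card + K.card := by
        rw [hQ, card_sdiff_of_subset hsub, card_image_of_injective _ (add_left_injective p)]
        have := card_le_card hsub
        rw [card_image_of_injective _ (add_left_injective p)] at this
        omega
      have hperQ : Per Q K := by
        intro g hg
        rw [hQ]
        have h1 : tr g (P \ K.image (· + p)) = tr g P \ tr g (K.image (· + p)) :=
          image_sdiff _ _ (add_right_injective g)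
        rw [h1, hper g hg]
        congr 1
        have : tr g (K.image (· + p)) = (tr g K).image (· + p) := by
          simp only [tr, image_image]
          apply image_congr
          intro x _
          simp only [Function.comp]
          abel
        rw [this, hK.tr_self hg]
      have hQn : Q.card ≤ n := by
        have hKpos : 0 < K.card := card_pos.2 hK.nonempty
        omega
      rw [hcard]
      exact dvd_add (IH Q hQn hperQ) dvd_rfl

lemma isSubgroupF_addStab {C : Finset G} (hC : C.Nonempty) : IsSubgroupF (addStab C) :=
  ⟨zero_mem_addStab hC, fun _ hg => neg_mem_addStab hC hg,
    fun _ hg _ hh => add_mem_addStab hC hg hh⟩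

lemma IsSubgroupF.inter {K K' : Finset G} (hK : IsSubgroupF K) (hK' : IsSubgroupF K') :
    IsSubgroupF (K ∩ K') := by
  refine ⟨mem_inter.2 ⟨hK.1, hK'.1⟩, ?_, ?_⟩
  · intro g hg
    rw [mem_inter] at hg ⊢
    exact ⟨hK.2.1 _ hg.1, hK'.2.1 _ hg.2⟩
  · intro g hg h hh
    rw [mem_inter] at hg hh ⊢
    exact ⟨hK.2.2 _ hg.1 _ hh.1, hK'.2.2 _ hg.2 _ hh.2⟩

lemma IsSubgroupF.addF {K K' : Finset G} (hK : IsSubgroupF K) (hK' : IsSubgroupF K') :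
    IsSubgroupF (K + K') := by
  refine ⟨mem_add.2 ⟨0, hK.1, 0, hK'.1, add_zero 0⟩, ?_, ?_⟩
  · intro g hg
    obtain ⟨a, ha, b, hb, rfl⟩ := mem_add.1 hg
    exact mem_add.2 ⟨-a, hK.2.1 _ ha, -b, hK'.2.1 _ hb, by abel⟩
  · intro g hg h hh
    obtain ⟨a, ha, b, hb, rfl⟩ := mem_add.1 hg
    obtain ⟨a', ha', b', hb', rfl⟩ := mem_add.1 hh
    exact mem_add.2 ⟨a + a', hK.2.2 _ ha _ ha', b + b', hK'.2.2 _ hb _ hb', by abel⟩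

/-- `|K + K'| * |K ∩ K'| = |K| * |K'|` for subgroup finsets. -/
lemma card_add_mul_card_inter {K K' : Finset G} (hK : IsSubgroupF K) (hK' : IsSubgroupF K') :
    (K + K').card * (K ∩ K').card = K.card * K'.card := by
  have hmem : ∀ p ∈ K ×ˢ K', p.1 + p.2 ∈ K + K' := by
    intro p hp
    rw [mem_product] at hp
    exact mem_add.2 ⟨p.1, hp.1, p.2, hp.2, rfl⟩
  have hsum := card_eq_sum_card_fiberwise hmem
  have hfib : ∀ m ∈ K + K',
      ((K ×ˢ K').filter fun p => p.1 + p.2 = m).card = (K ∩ K').card := by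
    intro m hm
    obtain ⟨a₀, ha₀, b₀, hb₀, hab⟩ := mem_add.1 hm
    apply card_bij' (i := fun p _ => p.1 - a₀) (j := fun j _ => (a₀ + j, b₀ - j))
    · intro p hp
      rw [mem_filter, mem_product] at hp
      rw [mem_inter]
      refine ⟨hK.sub_mem hp.1.1 ha₀, ?_⟩
      have heq : p.1 - a₀ = b₀ - p.2 := by
        have h1 : p.1 + p.2 = a₀ + b₀ := by rw [hp.2, ← hab]
        have h2 : p.1 + p.2 - (a₀ + b₀) = 0 := by rw [h1]; abel
        have h3 : p.1 - a₀ - (b₀ - p.2) = p.1 + p.2 - (a₀ + b₀) := by abel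
        rw [h2] at h3
        exact sub_eq_zero.mp h3
      rw [heq]
      exact hK'.sub_mem hb₀ hp.1.2
    · intro j hj
      rw [mem_inter] at hj
      rw [mem_filter, mem_product]
      exact ⟨⟨hK.2.2 _ ha₀ _ hj.1, hK'.sub_mem hb₀ hj.2⟩, by rw [← hab]; exact add_add_sub_cancel _ _ _⟩
    · intro p hp
      rw [mem_filter, mem_product] at hp
      have h1 : p.1 + p.2 = a₀ + b₀ := by rw [hp.2, ← hab]
      have e1 : a₀ + (p.1 - a₀) = p.1 := by abel
      have e2 : b₀ - (p.1 - a₀) = p.2 := by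
        have h4 : b₀ - (p.1 - a₀) - p.2 = a₀ + b₀ - (p.1 + p.2) := by abel
        rw [← h1] at h4
        simp only [sub_self] at h4
        exact sub_eq_zero.mp h4
      ext
      · simpa using e1
      · simpa using e2
    · intro j hj
      simp
  rw [Finset.sum_congr rfl hfib, Finset.sum_const, smul_eq_mul] at hsum
  rw [card_product] at hsum
  omega

/-- double counting: if `R ⊆ P ∩ Q`, `P` is `K`-periodic, `Q` is `K'`-periodic, then
`|R| * |K| * |K'| ≤ |P| * |Q| * |K ∩ K'|`. -/
lemma card_inter_mul_le {P Q K K' : Finset G} (hK : IsSubgroupF K) (hK' : IsSubgroupF K')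
    (hP : Per P K) (hQ : Per Q K') :
    (P ∩ Q).card * (K.card * K'.card) ≤ (P.card * Q.card) * (K ∩ K').card := by
  classical
  set R := P ∩ Q with hR
  have hmem : ∀ z ∈ R ×ˢ (K ×ˢ K'), (z.1 + z.2.1, z.1 + z.2.2) ∈ P ×ˢ Q := by
    intro z hz
    simp only [mem_product] at hz ⊢
    obtain ⟨hz1, hz2, hz3⟩ := hz
    rw [mem_inter] at hz1
    constructor
    · rw [← hP _ hz2, add_comm]; exact add_mem_tr hz1.1
    · rw [← hQ _ hz3, add_comm]; exact add_mem_tr hz1.2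
  have hsum := card_eq_sum_card_fiberwise hmem
  have hfib : ∀ y ∈ P ×ˢ Q,
      ((R ×ˢ (K ×ˢ K')).filter fun z => (z.1 + z.2.1, z.1 + z.2.2) = y).card
        ≤ (K ∩ K').card := by
    intro y _
    set F := (R ×ˢ (K ×ˢ K')).filter fun z => (z.1 + z.2.1, z.1 + z.2.2) = y with hF
    rcases F.eq_empty_or_nonempty with he | ⟨z₀, hz₀⟩
    · simp [he]
    · have key : ∀ z ∈ F, z = (z.1, (y.1 - z.1, y.2 - z.1)) := by
        intro z hz
        rw [hF, mem_filter] at hz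
        have h1 : z.1 + z.2.1 = y.1 := congrArg Prod.fst hz.2
        have h2 : z.1 + z.2.2 = y.2 := congrArg Prod.snd hz.2
        have e1 : z.2.1 = y.1 - z.1 := by rw [← h1]; abel
        have e2 : z.2.2 = y.2 - z.1 := by rw [← h2]; abel
        ext
        · simp
        · simpa using e1
        · simpa using e2
      have hinj : ∀ z ∈ F, z.1 - z₀.1 ∈ K ∩ K' := by
        intro z hz
        have hz' := hz; have hz₀' := hz₀
        rw [hF, mem_filter, mem_product, mem_product] at hz' hz₀'
        have h1 : z.1 + z.2.1 = y.1 := congrArg Prod.fst hz'.2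
        have h2 : z.1 + z.2.2 = y.2 := congrArg Prod.snd hz'.2
        have h3 : z₀.1 + z₀.2.1 = y.1 := congrArg Prod.fst hz₀'.2
        have h4 : z₀.1 + z₀.2.2 = y.2 := congrArg Prod.snd hz₀'.2
        have e1 : z.1 - z₀.1 = z₀.2.1 - z.2.1 := by
          have : z.1 - z₀.1 - (z₀.2.1 - z.2.1) = (z.1 + z.2.1) - (z₀.1 + z₀.2.1) := by abel
          rw [h1, h3, sub_self] at this
          exact sub_eq_zero.mp this
        have e2 : z.1 - z₀.1 = z₀.2.2 - z.2.2 := by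
          have : z.1 - z₀.1 - (z₀.2.2 - z.2.2) = (z.1 + z.2.2) - (z₀.1 + z₀.2.2) := by abel
          rw [h2, h4, sub_self] at this
          exact sub_eq_zero.mp this
        rw [mem_inter]
        constructor
        · rw [e1]; exact hK.sub_mem hz₀'.1.2.1 hz'.1.2.1
        · rw [e2]; exact hK'.sub_mem hz₀'.1.2.2 hz'.1.2.2
      calc F.card ≤ (K ∩ K').card := by
            apply card_le_card_of_injOn (fun z => z.1 - z₀.1) (fun z hz => hinj z hz)
            intro z hz w hw hzw
            have hz1 : z = (z.1, (y.1 - z.1, y.2 - z.1)) := key z hz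
            have hw1 : w = (w.1, (y.1 - w.1, y.2 - w.1)) := key w hw
            have : z.1 = w.1 := by
              have := sub_left_injective hzw
              exact this
            rw [hz1, hw1, this]
      _ = (K ∩ K').card := rfl
  have hle : ∑ y ∈ P ×ˢ Q,
      ((R ×ˢ (K ×ˢ K')).filter fun z => (z.1 + z.2.1, z.1 + z.2.2) = y).card
        ≤ (P ×ˢ Q).card * (K ∩ K').card := by
    calc _ ≤ ∑ _y ∈ P ×ˢ Q, (K ∩ K').card := Finset.sum_le_sum hfib
    _ = (P ×ˢ Q).card * (K ∩ K').card := by rw [Finset.sum_const, smul_eq_mul]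
  have h5 : (R ×ˢ (K ×ˢ K')).card = R.card * (K.card * K'.card) := by
    rw [card_product, card_product]
  have h6 : (P ×ˢ Q).card = P.card * Q.card := card_product _ _
  calc R.card * (K.card * K'.card) = (R ×ˢ (K ×ˢ K')).card := h5.symm
  _ = _ := hsum
  _ ≤ (P ×ˢ Q).card * (K ∩ K').card := hle
  _ = (P.card * Q.card) * (K ∩ K').card := by rw [h6]

lemma tr_union (g : G) (C D : Finset G) : tr g (C ∪ D) = tr g C ∪ tr g D :=
  image_union _ _

lemma tr_inter (g : G) (C D : Finset G) : tr g (C ∩ D) = tr g C ∩ tr g D :=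
  image_inter _ _ (add_right_injective g)

lemma tr_sdiff (g : G) (C D : Finset G) : tr g (C \ D) = tr g C \ tr g D :=
  image_sdiff _ _ (add_right_injective g)

lemma tr_image_add (g p : G) (C : Finset G) :
    tr g (C.image (· + p)) = (tr g C).image (· + p) := by
  simp only [tr, image_image]
  apply image_congr
  intro x _
  simp only [Function.comp]
  abel

lemma per_addStab {C : Finset G} (hC : C.Nonempty) : Per C (addStab C) :=
  fun _ hg => (mem_addStab hC).1 hg

lemma arithZ (a b u v : ℤ) (ha : 1 ≤ a) (hb : 1 ≤ b) (hav : a + 1 ≤ v) (hbu : b ≤ u)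
    (F1 : b * v + 2 ≤ u + a * b) (F2 : a * u + 2 ≤ v + a * b) : False := by
  rcases eq_or_lt_of_le hbu with rfl | hlt
  · nlinarith
  · nlinarith [mul_nonneg (by linarith : (0:ℤ) ≤ a - 1)
        (mul_nonneg (by linarith : (0:ℤ) ≤ b) (by linarith : (0:ℤ) ≤ u - b - 1)),
      mul_nonneg (by linarith : (0:ℤ) ≤ b - 1) (by linarith : (0:ℤ) ≤ u - b),
      mul_nonneg (by linarith : (0:ℤ) ≤ b) (by nlinarith : (0:ℤ) ≤ v - a * (u - b) - 2)]

lemma arithN (a b u v : ℕ) (ha : 1 ≤ a) (hb : 1 ≤ b) (hav : a + 1 ≤ v) (hbu : b ≤ u) :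
    u + b * a ≤ b * v + 1 ∨ v + a * b ≤ a * u + 1 := by
  by_contra hcon
  push_neg at hcon
  obtain ⟨h1, h2⟩ := hcon
  refine arithZ (a : ℤ) b u v (by exact_mod_cast ha) (by exact_mod_cast hb)
    (by exact_mod_cast hav) (by exact_mod_cast hbu) ?_ ?_
  · have : b * v + 2 ≤ u + b * a := h1
    zify at this
    linarith
  · have : a * u + 2 ≤ v + a * b := h2
    zify at this
    linarith

lemma unionStab_aux (X Y : Finset G) (hX : X.Nonempty) (hY : Y.Nonempty) (w g : G)
    (hwX : w ∈ X) (hwY : w ∈ Y) (hg : g ∈ addStab Y) (hgw : g + w ∉ X) :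
    min (X.card + (addStab X).card) (Y.card + (addStab Y).card)
      ≤ (X ∪ Y).card + (addStab X ∩ addStab Y).card := by
  classical
  set SX := addStab X with hSXdef
  set SY := addStab Y with hSYdef
  set J := SX ∩ SY with hJdef
  set M := SX + SY with hMdef
  have hSX : IsSubgroupF SX := isSubgroupF_addStab hX
  have hSY : IsSubgroupF SY := isSubgroupF_addStab hY
  have hJ : IsSubgroupF J := hSX.inter hSY
  have hM : IsSubgroupF M := hSX.addF hSY
  have hSXM : SX ⊆ M := by
    intro s hs
    exact mem_add.2 ⟨s, hs, 0, hSY.1, add_zero s⟩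
  have hSYM : SY ⊆ M := by
    intro s hs
    exact mem_add.2 ⟨0, hSX.1, s, hs, zero_add s⟩
  set x := SX.card with hxdef
  set y := SY.card with hydef
  set j := J.card with hjdef
  set m := M.card with hmdef
  have hj1 : 1 ≤ j := card_pos.2 hJ.nonempty
  have hx1 : 1 ≤ x := card_pos.2 hSX.nonempty
  have hy1 : 1 ≤ y := card_pos.2 hSY.nonempty
  have hmj : m * j = x * y := card_add_mul_card_inter hSX hSY
  -- u, v
  have hdvdx : j ∣ x := by
    apply Per.card_dvd hJ x SX le_rfl
    intro g' hg'
    exact hSX.tr_self (mem_inter.1 hg').1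
  have hdvdy : j ∣ y := by
    apply Per.card_dvd hJ y SY le_rfl
    intro g' hg'
    exact hSY.tr_self (mem_inter.1 hg').2
  obtain ⟨u, hu⟩ := hdvdx
  obtain ⟨v, hv⟩ := hdvdy
  have hu1 : 1 ≤ u := by
    rcases Nat.eq_zero_or_pos u with rfl | h
    · omega
    · exact h
  have hv1 : 1 ≤ v := by
    rcases Nat.eq_zero_or_pos v with rfl | h
    · omega
    · exact h
  have hm : m = u * v * j := by
    have h1 : m * j = (u * v * j) * j := by
      rw [hmj, hu, hv]; ring
    exact Nat.eq_of_mul_eq_mul_right (by omega) h1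
  -- the coset of M containing w
  set WM := M.image (· + w) with hWMdef
  have hWMcard : WM.card = m := card_image_of_injective _ (add_left_injective w)
  have htrWM : ∀ g' ∈ M, tr g' WM = WM := by
    intro g' hg'
    rw [hWMdef, tr_image_add, hM.tr_self hg']
  set P := X ∩ WM with hPdef
  set Q := Y ∩ WM with hQdef
  have perP : Per P SX := by
    intro g' hg'
    rw [hPdef, tr_inter, (mem_addStab hX).1 hg', htrWM g' (hSXM hg')]
  have perQ : Per Q SY := by
    intro g' hg'
    rw [hQdef, tr_inter, (mem_addStab hY).1 hg', htrWM g' (hSYM hg')]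
  have hwWM : w ∈ WM := mem_image.2 ⟨0, hM.1, zero_add w⟩
  have hwP : w ∈ P := mem_inter.2 ⟨hwX, hwWM⟩
  have hwQ : w ∈ Q := mem_inter.2 ⟨hwY, hwWM⟩
  obtain ⟨α, hα⟩ : x ∣ P.card := Per.card_dvd hSX P.card P le_rfl perP
  obtain ⟨β, hβ⟩ : y ∣ Q.card := Per.card_dvd hSY Q.card Q le_rfl perQ
  have hα1 : 1 ≤ α := by
    have : x ≤ P.card := perP.card_le ⟨w, hwP⟩
    rcases Nat.eq_zero_or_pos α with rfl | h
    · omega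
    · exact h
  have hβ1 : 1 ≤ β := by
    have : y ≤ Q.card := perQ.card_le ⟨w, hwQ⟩
    rcases Nat.eq_zero_or_pos β with rfl | h
    · omega
    · exact h
  -- the missing element g + w
  have hgwWM : g + w ∈ WM := mem_image.2 ⟨g, hSYM hg, rfl⟩
  have hPlt : P.card < m := by
    have hsub : P ⊆ WM := inter_subset_right
    have : P ⊂ WM := ⟨hsub, fun hcon => hgw (mem_inter.1 (hcon hgwWM)).1⟩
    calc P.card < WM.card := card_lt_card this
    _ = m := hWMcard
  have hαv : α + 1 ≤ v := by
    have h1 : x * α < u * v * j := by rw [← hα, ← hm]; exact hPlt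
    have h2 : j * u * α < j * u * v := by
      calc j * u * α = x * α := by rw [hu]
      _ < u * v * j := h1
      _ = j * u * v := by ring
    have := Nat.lt_of_mul_lt_mul_left h2
    omega
  have hβu : β ≤ u := by
    have h1 : y * β ≤ u * v * j := by
      rw [← hβ, ← hm, ← hWMcard]
      exact card_le_card inter_subset_right
    have h2 : j * v * β ≤ j * v * u := by
      calc j * v * β = y * β := by rw [hv]
      _ ≤ u * v * j := h1
      _ = j * v * u := by ring
    exact Nat.le_of_mul_le_mul_left h2 (by omega)
  -- double counting
  have hRle : (P ∩ Q).card ≤ α * β * j := by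
    have h1 := card_inter_mul_le hSX hSY perP perQ
    have h2 : (P ∩ Q).card * (x * y) ≤ (α * β * j) * (x * y) := by
      calc (P ∩ Q).card * (x * y) ≤ (P.card * Q.card) * j := h1
      _ = (α * β * j) * (x * y) := by rw [hα, hβ]; ring
    exact Nat.le_of_mul_le_mul_right h2 (by positivity)
  -- relating to differences
  have hQle : Q.card ≤ (Y \ X).card + (P ∩ Q).card := by
    have hsplit : Q.card = (Q \ P).card + (Q ∩ P).card := (card_sdiff_add_card_inter Q P).symm
    have hsub : Q \ P ⊆ Y \ X := by
      intro z hz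
      rw [mem_sdiff] at hz ⊢
      obtain ⟨hz1, hz2⟩ := hz
      rw [mem_inter] at hz1
      refine ⟨hz1.1, fun hzX => hz2 ?_⟩
      exact mem_inter.2 ⟨hzX, hz1.2⟩
    rw [hsplit, inter_comm]
    exact Nat.add_le_add_right (card_le_card hsub) _
  have hPle : P.card ≤ (X \ Y).card + (P ∩ Q).card := by
    have hsplit : P.card = (P \ Q).card + (P ∩ Q).card := (card_sdiff_add_card_inter P Q).symm
    have hsub : P \ Q ⊆ X \ Y := by
      intro z hz
      rw [mem_sdiff] at hz ⊢
      obtain ⟨hz1, hz2⟩ := hz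
      rw [mem_inter] at hz1
      refine ⟨hz1.1, fun hzY => hz2 ?_⟩
      exact mem_inter.2 ⟨hzY, hz1.2⟩
    rw [hsplit]
    exact Nat.add_le_add_right (card_le_card hsub) _
  -- the two cases
  rcases arithN α β u v hα1 hβ1 hαv hβu with hcase | hcase
  · -- u + β * α ≤ β * v + 1 : gain on the X side
    have key : x ≤ (Y \ X).card + j := by
      have h1 : (u + β * α) * j ≤ (β * v + 1) * j := Nat.mul_le_mul_right j hcase
      have h2 : x + α * β * j ≤ Q.card + j := by
        calc x + α * β * j = (u + β * α) * j := by rw [hu]; ring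
        _ ≤ (β * v + 1) * j := h1
        _ = y * β + j := by rw [hv]; ring
        _ = Q.card + j := by rw [hβ]
      have h3 : Q.card + j ≤ (Y \ X).card + α * β * j + j := by
        have := hQle
        have := hRle
        omega
      omega
    calc min (X.card + SX.card) (Y.card + SY.card) ≤ X.card + SX.card := min_le_left _ _
    _ = X.card + x := rfl
    _ ≤ X.card + ((Y \ X).card + j) := Nat.add_le_add_left key _
    _ = ((Y \ X).card + X.card) + j := by ring
    _ = (Y ∪ X).card + j := by rw [card_sdiff_add_card]
    _ = (X ∪ Y).card + J.card := by rw [union_comm]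
  · -- v + α * β ≤ α * u + 1 : gain on the Y side
    have key : y ≤ (X \ Y).card + j := by
      have h1 : (v + α * β) * j ≤ (α * u + 1) * j := Nat.mul_le_mul_right j hcase
      have h2 : y + α * β * j ≤ P.card + j := by
        calc y + α * β * j = (v + α * β) * j := by rw [hv]; ring
        _ ≤ (α * u + 1) * j := h1
        _ = x * α + j := by rw [hu]; ring
        _ = P.card + j := by rw [hα]
      have h3 : P.card + j ≤ (X \ Y).card + α * β * j + j := by
        have := hPle
        have := hRle
        omega
      omega
    calc min (X.card + SX.card) (Y.card + SY.card) ≤ Y.card + SY.card := min_le_right _ _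
    _ = Y.card + y := rfl
    _ ≤ Y.card + ((X \ Y).card + j) := Nat.add_le_add_left key _
    _ = ((X \ Y).card + Y.card) + j := by ring
    _ = (X ∪ Y).card + J.card := by rw [card_sdiff_add_card]

/-- Key union lemma: `|X ∪ Y| + |stab (X ∪ Y)| ≥ min (|X| + |stab X|) (|Y| + |stab Y|)`. -/
lemma unionStab (X Y : Finset G) (hX : X.Nonempty) (hY : Y.Nonempty) :
    min (X.card + (addStab X).card) (Y.card + (addStab Y).card)
      ≤ (X ∪ Y).card + (addStab (X ∪ Y)).card := by
  classical
  by_cases hXY : X ⊆ Y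
  · rw [union_eq_right.2 hXY]
    exact min_le_right _ _
  by_cases hYX : Y ⊆ X
  · rw [union_eq_left.2 hYX]
    exact min_le_left _ _
  have hUne : (X ∪ Y).Nonempty := hX.mono subset_union_left
  have hJsub : addStab X ∩ addStab Y ⊆ addStab (X ∪ Y) := by
    intro g hg
    rw [mem_inter] at hg
    rw [mem_addStab hUne, tr_union, (mem_addStab hX).1 hg.1, (mem_addStab hY).1 hg.2]
  have hmain : min (X.card + (addStab X).card) (Y.card + (addStab Y).card)
      ≤ (X ∪ Y).card + (addStab X ∩ addStab Y).card := by
    set W := X ∩ Y with hWdef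
    rcases W.eq_empty_or_nonempty with hWe | hWne
    · -- disjoint case
      have hdisj : Disjoint X Y := disjoint_iff_inter_eq_empty.2 hWe
      have hcard : (X ∪ Y).card = X.card + Y.card := card_union_of_disjoint hdisj
      rcases le_total (addStab X).card (addStab Y).card with hc | hc
      · calc min _ _ ≤ X.card + (addStab X).card := min_le_left _ _
        _ ≤ X.card + (addStab Y).card := Nat.add_le_add_left hc _
        _ ≤ X.card + Y.card := Nat.add_le_add_left (card_addStab_le hY) _
        _ ≤ (X ∪ Y).card + (addStab X ∩ addStab Y).card := by rw [hcard]; omega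
      · calc min _ _ ≤ Y.card + (addStab Y).card := min_le_right _ _
        _ ≤ Y.card + (addStab X).card := Nat.add_le_add_left hc _
        _ ≤ Y.card + X.card := Nat.add_le_add_left (card_addStab_le hX) _
        _ ≤ (X ∪ Y).card + (addStab X ∩ addStab Y).card := by rw [hcard]; omega
    · by_cases hper : ∀ g ∈ addStab X ∪ addStab Y, tr g W = W
      · -- W is periodic under both stabilizers
        have hXWne : (X \ W).Nonempty := by
          rw [hWdef, sdiff_inter_self_left]
          exact sdiff_nonempty.2 hXY
        have hYWne : (Y \ W).Nonempty := by
          have : Y \ W = Y \ X := by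
            rw [hWdef]
            ext z
            simp only [mem_sdiff, mem_inter]
            tauto
          rw [this]
          exact sdiff_nonempty.2 hYX
        have perXW : Per (X \ W) (addStab X) := by
          intro g hg
          rw [tr_sdiff, (mem_addStab hX).1 hg, hper g (mem_union_left _ hg)]
        have perYW : Per (Y \ W) (addStab Y) := by
          intro g hg
          rw [tr_sdiff, (mem_addStab hY).1 hg, hper g (mem_union_right _ hg)]
        have hXWcard : (addStab X).card ≤ (X \ W).card := perXW.card_le hXWne
        have hYWcard : (addStab Y).card ≤ (Y \ W).card := perYW.card_le hYWne
        have hYsd : Y \ W = Y \ X := by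
          rw [hWdef]; ext z; simp only [mem_sdiff, mem_inter]; tauto
        have hXsd : X \ W = X \ Y := by
          rw [hWdef, sdiff_inter_self_left]
        have hcard1 : (X ∪ Y).card = Y.card + (X \ W).card := by
          rw [hXsd]
          have := card_sdiff_add_card X Y
          omega
        have hcard2 : (X ∪ Y).card = X.card + (Y \ W).card := by
          rw [hYsd]
          have h1 := card_sdiff_add_card Y X
          have h2 : (Y ∪ X).card = (X ∪ Y).card := by rw [union_comm]
          omega
        rcases le_total (addStab X).card (addStab Y).card with hc | hc
        · calc min _ _ ≤ X.card + (addStab X).card := min_le_left _ _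
          _ ≤ X.card + (Y \ W).card := by
              have : (addStab X).card ≤ (Y \ W).card := le_trans hc hYWcard
              omega
          _ ≤ (X ∪ Y).card + (addStab X ∩ addStab Y).card := by omega
        · calc min _ _ ≤ Y.card + (addStab Y).card := min_le_right _ _
          _ ≤ Y.card + (X \ W).card := by
              have : (addStab Y).card ≤ (X \ W).card := le_trans hc hXWcard
              omega
          _ ≤ (X ∪ Y).card + (addStab X ∩ addStab Y).card := by omega
      · -- some stabilizer element moves W : use the aux lemma
        push_neg at hper
        obtain ⟨g, hgmem, hgW⟩ := hper
        have hnsub : ¬ tr g W ⊆ W := by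
          intro hsub
          exact hgW (eq_of_subset_of_card_le hsub (by rw [tr_card]))
        obtain ⟨z, hz1, hz2⟩ := not_subset.1 hnsub
        obtain ⟨w, hw, rfl⟩ := mem_tr.1 hz1
        rw [hWdef, mem_inter] at hw
        rcases mem_union.1 hgmem with hgX | hgY
        · -- g ∈ addStab X : swap roles
          have hgwY : g + w ∉ Y := by
            intro hcon
            apply hz2
            rw [hWdef, mem_inter]
            refine ⟨?_, hcon⟩
            rw [← (mem_addStab hX).1 hgX]
            exact add_mem_tr hw.1
          have := unionStab_aux Y X hY hX w g hw.2 hw.1 hgX hgwY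
          rw [min_comm, union_comm, inter_comm] at this
          exact this
        · have hgwX : g + w ∉ X := by
            intro hcon
            apply hz2
            rw [hWdef, mem_inter]
            refine ⟨hcon, ?_⟩
            rw [← (mem_addStab hY).1 hgY]
            exact add_mem_tr hw.2
          exact unionStab_aux X Y hX hY w g hw.1 hw.2 hgY hgwX
  exact hmain.trans (Nat.add_le_add_left (card_le_card hJsub) _)
lemma chainStab {ι : Type*} (C : ι → Finset G) (m : ℕ) (I : Finset ι) (hI : I.Nonempty)
    (h1 : ∀ i ∈ I, (C i).Nonempty) (h2 : ∀ i ∈ I, m ≤ (C i).card + (addStab (C i)).card) :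
    m ≤ (I.sup C).card + (addStab (I.sup C)).card := by
  classical
  revert h1 h2
  induction hI using Finset.Nonempty.cons_induction with
  | singleton i =>
    intro h1 h2
    rw [sup_singleton]
    exact h2 i (mem_singleton_self i)
  | cons i s hi hs IH =>
    intro h1 h2
    rw [sup_cons, sup_eq_union]
    have hCi : (C i).Nonempty := h1 i (mem_cons_self i s)
    have hsne : (s.sup C).Nonempty := by
      obtain ⟨i₀, hi₀⟩ := hs
      exact (h1 i₀ (mem_cons_of_mem hi₀)).mono (le_sup hi₀)
    have hmin : m ≤ min ((C i).card + (addStab (C i)).card)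
        ((s.sup C).card + (addStab (s.sup C)).card) := by
      refine le_min (h2 i (mem_cons_self i s)) (IH ?_ ?_)
      · exact fun i' hi' => h1 i' (mem_cons_of_mem hi')
      · exact fun i' hi' => h2 i' (mem_cons_of_mem hi')
    exact hmin.trans (unionStab _ _ hCi hsne)

/-- Weak Kneser theorem: `|A| + |B| ≤ |A + B| + |stab (A + B)|`. -/
theorem weak_kneser_rec (n : ℕ) : ∀ A B : Finset G, A.Nonempty → B.Nonempty →
    (A + B).card * (A + B).card + B.card ≤ n →
    A.card + B.card ≤ (A + B).card + (addStab (A + B)).card := by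
  induction n using Nat.strong_induction_on with
  | _ n IH =>
  intro A B hA hB hn
  classical
  obtain ⟨b', hb'⟩ := hB
  have hDne : (A + B).Nonempty := hA.add ⟨b', hb'⟩
  by_cases hCA : ∀ a ∈ A, ∀ b ∈ B, a - b' + b ∈ A
  · -- A is invariant under translation by B - b'
    have htrb : ∀ b ∈ B, tr (b - b') A = A := by
      intro b hb
      apply eq_of_subset_of_card_le
      · intro z hz
        obtain ⟨a, ha, rfl⟩ := mem_tr.1 hz
        have h := hCA a ha b hb
        have he : b - b' + a = a - b' + b := by abel
        rw [he]
        exact h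
      · rw [tr_card]
    have hAB : A + B = tr b' A := by
      apply Subset.antisymm
      · intro z hz
        obtain ⟨a, ha, b, hb, rfl⟩ := mem_add.1 hz
        have h1 : (b - b') + a ∈ tr (b - b') A := add_mem_tr ha
        rw [htrb b hb] at h1
        have he : a + b = b' + ((b - b') + a) := by abel
        rw [he]
        exact add_mem_tr h1
      · intro z hz
        obtain ⟨a, ha, rfl⟩ := mem_tr.1 hz
        exact mem_add.2 ⟨a, ha, b', hb', by abel⟩
    have hDcard : (A + B).card = A.card := by rw [hAB, tr_card]
    have hstab : B.image (· - b') ⊆ addStab (A + B) := by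
      intro g hg
      obtain ⟨b, hb, rfl⟩ := mem_image.1 hg
      rw [mem_addStab hDne, hAB, tr_tr]
      have he : b - b' + b' = b' + (b - b') := by abel
      rw [he, ← tr_tr, htrb b hb]
    have hBcard : B.card ≤ (addStab (A + B)).card := by
      calc B.card = (B.image (· - b')).card :=
            (card_image_of_injective _ sub_left_injective).symm
      _ ≤ (addStab (A + B)).card := card_le_card hstab
    omega
  · -- there is a valid transform
    push_neg at hCA
    obtain ⟨a₀, ha₀, b₀, hb₀, hnab⟩ := hCA
    set Ap := fun p : G => A ∪ tr (p - b') B with hApdef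
    set Bp := fun p : G => B ∩ (A.image ((b' - p) + ·)) with hBpdef
    set Cp := fun p : G => Ap p + Bp p with hCpdef
    set I := A.filter (fun p => ¬ tr (p - b') B ⊆ A) with hIdef
    have ha₀I : a₀ ∈ I := by
      rw [hIdef, mem_filter]
      refine ⟨ha₀, fun hsub => hnab ?_⟩
      exact hsub (add_mem_tr hb₀)
    have hBpB : ∀ p, Bp p ⊆ B := fun p => inter_subset_left
    have hABp : ∀ p, A ⊆ Ap p := fun p => subset_union_left
    have hb'Bp : ∀ p ∈ A, b' ∈ Bp p := by
      intro p hp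
      exact mem_inter.2 ⟨hb', mem_image.2 ⟨p, hp, by abel⟩⟩
    have hApne : ∀ p, (Ap p).Nonempty := fun p => ⟨a₀, hABp p ha₀⟩
    have hBpne : ∀ p ∈ A, (Bp p).Nonempty := fun p hp => ⟨b', hb'Bp p hp⟩
    have hCpD : ∀ p ∈ A, Cp p ⊆ A + B := by
      intro p hp z hz
      obtain ⟨s, hs, t, ht, rfl⟩ := mem_add.1 hz
      rw [mem_inter] at ht
      obtain ⟨htB, htA⟩ := ht
      rcases mem_union.1 hs with hsA | hsB
      · exact mem_add.2 ⟨s, hsA, t, htB, rfl⟩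
      · obtain ⟨b₁, hb₁, rfl⟩ := mem_tr.1 hsB
        obtain ⟨a₂, ha₂, rfl⟩ := mem_image.1 htA
        exact mem_add.2 ⟨a₂, ha₂, b₁, hb₁, by abel⟩
    have hCpcard : ∀ p ∈ A, (Ap p).card + (Bp p).card = A.card + B.card := by
      intro p hp
      have hkey : A ∩ tr (p - b') B = tr (p - b') (Bp p) := by
        ext z
        constructor
        · intro hz
          rw [mem_inter] at hz
          obtain ⟨hzA, hztr⟩ := hz
          obtain ⟨b, hb, rfl⟩ := mem_tr.1 hztr
          refine mem_tr.2 ⟨b, ?_, rfl⟩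
          exact mem_inter.2 ⟨hb, mem_image.2 ⟨p - b' + b, hzA, by abel⟩⟩
        · intro hz
          obtain ⟨t, ht, rfl⟩ := mem_tr.1 hz
          rw [mem_inter] at ht
          obtain ⟨htB, htA⟩ := ht
          rw [mem_inter]
          obtain ⟨a₂, ha₂, rfl⟩ := mem_image.1 htA
          constructor
          · have he : p - b' + (b' - p + a₂) = a₂ := by abel
            rw [he]
            exact ha₂
          · exact mem_tr.2 ⟨b' - p + a₂, htB, rfl⟩
      have h1 := card_union_add_card_inter A (tr (p - b') B)
      rw [hkey, tr_card, tr_card] at h1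
      have h2 : (Bp p).card ≤ B.card := card_le_card (hBpB p)
      simp only [hApdef]
      omega
    have hcover : ∀ z ∈ A + B, ∃ p ∈ I, z ∈ Cp p := by
      intro z hz
      obtain ⟨q, hq, b, hb, rfl⟩ := mem_add.1 hz
      by_cases hval : tr (q - b') B ⊆ A
      · refine ⟨a₀, ha₀I, ?_⟩
        have ha₂ : q - b' + b ∈ A := hval (add_mem_tr hb)
        exact mem_add.2 ⟨q - b' + b, mem_union_left _ ha₂, b', hb'Bp a₀ ha₀, by abel⟩
      · refine ⟨q, by rw [hIdef, mem_filter]; exact ⟨hq, hval⟩, ?_⟩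
        refine mem_add.2 ⟨q - b' + b, ?_, b', hb'Bp q hq, by abel⟩
        exact mem_union_right _ (add_mem_tr hb)
    have hIA : I ⊆ A := filter_subset _ _
    have hDsup : A + B = I.sup Cp := by
      apply Subset.antisymm
      · intro z hz
        obtain ⟨p, hp, hzp⟩ := hcover z hz
        exact (le_sup hp : Cp p ≤ I.sup Cp) hzp
      · exact Finset.sup_le fun p hp => hCpD p (hIA hp)
    by_cases hBig : ∃ p ∈ I, Cp p = A + B
    · -- transform with the same sumset : recurse on smaller B
      obtain ⟨p, hpI, hpEq⟩ := hBig
      have hpEq' : Ap p + Bp p = A + B := hpEq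
      have hpA : p ∈ A := hIA hpI
      have hval : ¬ tr (p - b') B ⊆ A := (mem_filter.1 hpI).2
      obtain ⟨z, hz1, hz2⟩ := not_subset.1 hval
      obtain ⟨b₁, hb₁, rfl⟩ := mem_tr.1 hz1
      have hb₁Bp : b₁ ∉ Bp p := by
        intro hcon
        rw [mem_inter] at hcon
        obtain ⟨_, htA⟩ := hcon
        obtain ⟨a₂, ha₂, he⟩ := mem_image.1 htA
        apply hz2
        have hh : p - b' + b₁ = a₂ := by rw [← he]; abel
        rw [hh]
        exact ha₂
      have hBplt : (Bp p).card < B.card := by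
        apply card_lt_card
        exact ⟨hBpB p, fun hcon => hb₁Bp (hcon hb₁)⟩
      have hrec := IH ((A + B).card * (A + B).card + (Bp p).card) (by omega)
        (Ap p) (Bp p) (hApne p) (hBpne p hpA) (by rw [hpEq'])
      rw [hpEq'] at hrec
      have := hCpcard p hpA
      omega
    · -- all transforms shrink the sumset : use the chain lemma
      push_neg at hBig
      have hd1 : 1 ≤ (A + B).card := card_pos.2 hDne
      have hrec : ∀ p ∈ I, A.card + B.card ≤ (Cp p).card + (addStab (Cp p)).card := by
        intro p hpI
        have hpA : p ∈ A := hIA hpI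
        have hCpEq : Cp p = Ap p + Bp p := rfl
        have hlt : (Cp p).card < (A + B).card := by
          apply card_lt_card
          exact ⟨hCpD p hpA, fun hcon =>
            hBig p hpI (Subset.antisymm (hCpD p hpA) hcon)⟩
        have hBpCp : (Bp p).card ≤ (Cp p).card := by
          have htr : tr a₀ (Bp p) ⊆ Cp p := by
            intro z hz
            obtain ⟨t, ht, rfl⟩ := mem_tr.1 hz
            exact mem_add.2 ⟨a₀, hABp p ha₀, t, ht, rfl⟩
          calc (Bp p).card = (tr a₀ (Bp p)).card := (tr_card _ _).symm
          _ ≤ (Cp p).card := card_le_card htr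
        have hmeas : (Cp p).card * (Cp p).card + (Bp p).card < n := by
          set d := (A + B).card
          have h1 : (Cp p).card ≤ d - 1 := by omega
          have h2 : (Cp p).card * (Cp p).card ≤ (d-1) * (d-1) :=
            Nat.mul_le_mul h1 h1
          have h3 : (d-1) * (d-1) + (d-1) < d * d := by
            obtain ⟨k, hk⟩ : ∃ k, d = k + 1 := ⟨d - 1, by omega⟩
            rw [hk]
            have he : (k+1) * (k+1) = k*k + 2*k + 1 := by ring
            simp only [Nat.add_sub_cancel]
            omega
          have h4 : d * d + B.card ≤ n := hn
          omega
        have hres := IH ((Cp p).card * (Cp p).card + (Bp p).card) (by omega)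
          (Ap p) (Bp p) (hApne p) (hBpne p hpA) (by rw [hCpEq])
        rw [← hCpEq] at hres
        have := hCpcard p hpA
        omega
      have hCpne : ∀ p ∈ I, (Cp p).Nonempty :=
        fun p hpI => (hApne p).add (hBpne p (hIA hpI))
      have hchain := chainStab Cp (A.card + B.card) I ⟨a₀, ha₀I⟩ hCpne hrec
      rw [← hDsup] at hchain
      exact hchain

theorem weak_kneser (A B : Finset G) (hA : A.Nonempty) (hB : B.Nonempty) :
    A.card + B.card ≤ (A + B).card + (addStab (A + B)).card :=
  weak_kneser_rec ((A + B).card * (A + B).card + B.card) A B hA hB le_rfl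
end

open Pointwise

/-- A consequence of Kneser's theorem: if `|A + A| ≤ K|A|` with `K < 2` then `A + A` is a
union of cosets of a finite subgroup `H` of size at least `(2 - K)|A|`. -/
theorem kneser_consequence (G : Type*) [AddCommGroup G] [DecidableEq G]
    (A : Finset G) (hA : A.Nonempty) (K : ℝ) (hK : K < 2)
    (h : ((A + A).card : ℝ) ≤ K * A.card) :
    ∃ H : AddSubgroup G, (H : Set G).Finite ∧
      (2 - K) * A.card ≤ ((H : Set G).ncard : ℝ) ∧
      (↑(A + A) : Set G) + (H : Set G) = (↑(A + A) : Set G) := by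
  classical
  set S := A + A with hSdef
  have hSne : S.Nonempty := hA.add hA
  set Z := addStab S with hZdef
  have hW : A.card + A.card ≤ S.card + Z.card := weak_kneser A A hA hA
  refine ⟨{ carrier := ↑Z
            zero_mem' := by
              simpa using zero_mem_addStab hSne
            add_mem' := by
              intro a b ha hb
              simp only [Finset.mem_coe] at ha hb ⊢
              exact add_mem_addStab hSne ha hb
            neg_mem' := by
              intro a ha
              simp only [Finset.mem_coe] at ha ⊢
              exact neg_mem_addStab hSne ha }, ?_, ?_, ?_⟩
  · exact Z.finite_toSet
  · have hncard : ((Z : Set G)).ncard = Z.card := Set.ncard_coe_finset Z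
    show (2 - K) * (A.card : ℝ) ≤ ((Z : Set G).ncard : ℝ)
    rw [hncard]
    have hc : (A.card : ℝ) + A.card ≤ (S.card : ℝ) + Z.card := by exact_mod_cast hW
    nlinarith [hc, h, Nat.cast_nonneg (α := ℝ) A.card]
  · show (↑S : Set G) + (↑Z : Set G) = (↑S : Set G)
    rw [← Finset.coe_add]
    rw [add_addStab_eq hSne]
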